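/- If a homogeneous form F of degree d in n variables over ℂ is a direct sum (i.e. F = F_1 + F_2 with nonzero F_1 ∈ S^d V_1, F_2 ∈ S^d V_2 and V = V_1 ⊕ V_2), then its apolar ideal F^⊥ has a minimal generator of degree d. -/

import Mathlib

/-!
Apolarity setup.  `S = ℂ[x_1,…,x_n]` and its dual ring `T = ℂ[α_1,…,α_n]` are both
realized as `MvPolynomial (Fin n) ℂ`; the apolarity action `Θ ⌟ F` (`contract Θ F`)
lets `α_i` act as the partial differentiation operator `∂/∂x_i`.
-/

open MvPolynomial

noncomputable section Apolarity

/-- Partial derivatives on `ℂ[x_1,…,x_n]` commute. -/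
lemma pderiv_pderiv_comm (n : ℕ) (i j : Fin n) (f : MvPolynomial (Fin n) ℂ) :
    pderiv i (pderiv j f) = pderiv j (pderiv i f) := by
  induction f using MvPolynomial.induction_on with
  | C a => simp
  | add p q hp hq => simp [hp, hq]
  | mul_X p k hp =>
    rcases eq_or_ne i k with rfl | hik
    · rcases eq_or_ne j i with rfl | hjk
      · rfl
      · simp only [pderiv_mul, pderiv_X_self, pderiv_X_of_ne hjk, pderiv_X_of_ne hjk.symm,
          map_add, map_zero, map_one, Derivation.map_one_eq_zero, mul_one, mul_zero,
          add_zero, zero_add, hp]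
    · rcases eq_or_ne j k with rfl | hjk
      · simp only [pderiv_mul, pderiv_X_self, pderiv_X_of_ne hik, pderiv_X_of_ne hik.symm,
          map_add, map_zero, map_one, Derivation.map_one_eq_zero, mul_one, mul_zero,
          add_zero, zero_add, hp]
      · simp only [pderiv_mul, pderiv_X_of_ne hik.symm, pderiv_X_of_ne hjk.symm, map_add,
          map_zero, mul_zero, add_zero, zero_add, hp]

variable (n : ℕ)

/-- The endomorphism `∂/∂x_i` of `S = ℂ[x_1,…,x_n]`. -/
def derOp (i : Fin n) : Module.End ℂ (MvPolynomial (Fin n) ℂ) :=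
  (pderiv i).toLinearMap

lemma derOp_commute (i j : Fin n) : Commute (derOp n i) (derOp n j) :=
  LinearMap.ext fun f => pderiv_pderiv_comm n i j f

/-- The commuting product of the operators `(∂/∂x_i)^(m i)`. -/
def piDiffHom : (Fin n → Multiplicative ℕ) →* Module.End ℂ (MvPolynomial (Fin n) ℂ) :=
  MonoidHom.noncommPiCoprod (fun i : Fin n => powersHom _ (derOp n i))
    (fun i j _ x y => ((derOp_commute n i j).pow_pow x y))

/-- The differential operator `∏ i, (∂/∂x_i)^(m i)` attached to an exponent vector `m`. -/
def diffMonoidHom : Multiplicative (Fin n →₀ ℕ) →* Module.End ℂ (MvPolynomial (Fin n) ℂ) :=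
  (piDiffHom n).comp
    (AddMonoidHom.toMultiplicative
      (Finsupp.coeFnAddHom : (Fin n →₀ ℕ) →+ (Fin n → ℕ)))

/-- The apolarity action of the dual ring `T = ℂ[α_1,…,α_n]` on `S = ℂ[x_1,…,x_n]`, as an
algebra homomorphism to differential operators: `α_i` acts as `∂/∂x_i`. -/
def apolarAlgHom :
    MvPolynomial (Fin n) ℂ →ₐ[ℂ] Module.End ℂ (MvPolynomial (Fin n) ℂ) :=
  AddMonoidAlgebra.lift ℂ _ (Fin n →₀ ℕ) (diffMonoidHom n)

variable {n}

/-- The apolarity action `Θ ⌟ F`: apply to `F` the differential operator obtained from `Θ`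
by substituting `∂/∂x_i` for the `i`-th (dual) variable. -/
def contract (Θ F : MvPolynomial (Fin n) ℂ) : MvPolynomial (Fin n) ℂ :=
  apolarAlgHom n Θ F

lemma apolarAlgHom_X (i : Fin n) : apolarAlgHom n (X i) = derOp n i := by
  classical
  have hX : (X i : MvPolynomial (Fin n) ℂ)
      = AddMonoidAlgebra.single (Finsupp.single i 1) (1 : ℂ) := rfl
  rw [hX]
  rw [show apolarAlgHom n (AddMonoidAlgebra.single (Finsupp.single i 1) (1:ℂ))
      = (1:ℂ) • diffMonoidHom n (Multiplicative.ofAdd (Finsupp.single i 1)) from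
    AddMonoidAlgebra.lift_single _ _ _]
  rw [one_smul]
  show piDiffHom n ((AddMonoidHom.toMultiplicative
      (Finsupp.coeFnAddHom : (Fin n →₀ ℕ) →+ (Fin n → ℕ)))
      (Multiplicative.ofAdd (Finsupp.single i 1))) = derOp n i
  have harg : (AddMonoidHom.toMultiplicative
        (Finsupp.coeFnAddHom : (Fin n →₀ ℕ) →+ (Fin n → ℕ)))
        (Multiplicative.ofAdd (Finsupp.single i 1))
      = Pi.mulSingle (M := fun _ : Fin n => Multiplicative ℕ) i (Multiplicative.ofAdd 1) := by
    funext j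
    rcases eq_or_ne j i with rfl | hj
    · show Multiplicative.ofAdd ((Finsupp.single j 1 : Fin n →₀ ℕ) j)
        = Pi.mulSingle (M := fun _ : Fin n => Multiplicative ℕ) j (Multiplicative.ofAdd 1) j
      rw [Finsupp.single_eq_same, Pi.mulSingle_eq_same]
    · show Multiplicative.ofAdd ((Finsupp.single i 1 : Fin n →₀ ℕ) j)
        = Pi.mulSingle (M := fun _ : Fin n => Multiplicative ℕ) i (Multiplicative.ofAdd 1) j
      rw [Finsupp.single_eq_of_ne hj, Pi.mulSingle_eq_of_ne hj]
      exact ofAdd_zero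
  refine (congrArg (piDiffHom n) harg).trans ?_
  rw [piDiffHom]
  exact (MonoidHom.noncommPiCoprod_mulSingle _ _ _).trans rfl

/-- Sanity check: the dual variable `α_i` acts on `F` as `∂F/∂x_i`. -/
@[simp] lemma contract_X (i : Fin n) (F : MvPolynomial (Fin n) ℂ) :
    contract (X i) F = pderiv i F := by
  rw [contract, apolarAlgHom_X]; rfl

/-- The apolar (annihilator) ideal `F^⊥ = {Θ ∈ T : Θ ⌟ F = 0}` of a polynomial `F`. -/
def apolarIdeal (F : MvPolynomial (Fin n) ℂ) : Ideal (MvPolynomial (Fin n) ℂ) where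
  carrier := {Θ | contract Θ F = 0}
  zero_mem' := by simp [contract]
  add_mem' := by
    intro a b ha hb
    simp only [Set.mem_setOf_eq, contract, map_add, LinearMap.add_apply] at *
    rw [ha, hb, add_zero]
  smul_mem' := by
    intro c x hx
    simp only [Set.mem_setOf_eq, smul_eq_mul, contract, map_mul, Module.End.mul_apply] at *
    rw [hx, map_zero]

@[simp] lemma mem_apolarIdeal {Θ F : MvPolynomial (Fin n) ℂ} :
    Θ ∈ apolarIdeal F ↔ contract Θ F = 0 := Iff.rfl

variable (n)

/-- The irrelevant maximal ideal `m = ⟨α_1,…,α_n⟩` of `T`. -/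
def irrIdeal : Ideal (MvPolynomial (Fin n) ℂ) :=
  Ideal.span (Set.range X)

variable {n}

/-- The homogeneous ideal `I` has a minimal generator of degree `k`, i.e. `(I/mI)_k ≠ 0`:
there is a homogeneous element of `I` of degree `k` not belonging to `m * I`. -/
def HasMinGenOfDegree (I : Ideal (MvPolynomial (Fin n) ℂ)) (k : ℕ) : Prop :=
  ∃ Θ, Θ ∈ I ∧ Θ.IsHomogeneous k ∧ Θ ∉ irrIdeal n * I

/-- The homogeneous ideal `I` has at least `r` minimal generators of degree `k`, i.e.
`dim_ℂ (I/mI)_k ≥ r`: there are `r` homogeneous degree-`k` elements of `I` that are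
linearly independent modulo `m * I`. -/
def MinGensAtLeast (I : Ideal (MvPolynomial (Fin n) ℂ)) (k r : ℕ) : Prop :=
  ∃ Θ : Fin r → MvPolynomial (Fin n) ℂ,
    (∀ i, Θ i ∈ I ∧ (Θ i).IsHomogeneous k) ∧
    ∀ c : Fin r → ℂ, (∑ i, c i • Θ i) ∈ irrIdeal n * I → ∀ i, c i = 0

/-- `F` is an `s`-fold direct sum of degree `d`: `F = F_1 + ⋯ + F_s` where the `F_i` are
nonzero degree-`d` forms in independent subspaces `V_i` of the space of linear forms with
`V = V_1 ⊕ ⋯ ⊕ V_s` (i.e. in disjoint sets of variables, up to linear change of variables;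
`F_i ∈ S^d V_i` is expressed as membership in the subalgebra generated by `V_i`). -/
def IsSFoldDirectSum (F : MvPolynomial (Fin n) ℂ) (d s : ℕ) : Prop :=
  ∃ (V : Fin s → Submodule ℂ (MvPolynomial (Fin n) ℂ))
    (G : Fin s → MvPolynomial (Fin n) ℂ),
    (∀ i, V i ≤ homogeneousSubmodule (Fin n) ℂ 1) ∧
    iSupIndep V ∧
    (⨆ i, V i) = homogeneousSubmodule (Fin n) ℂ 1 ∧
    (∀ i, G i ≠ 0 ∧ (G i).IsHomogeneous d ∧ G i ∈ Algebra.adjoin ℂ (V i : Set _)) ∧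
    F = ∑ i, G i

/-- `F` is a direct sum: `F = F₁ + F₂` with `F₁ ∈ S^d V₁`, `F₂ ∈ S^d V₂` nonzero and
`V = V₁ ⊕ V₂`. -/
def IsDirectSum (F : MvPolynomial (Fin n) ℂ) (d : ℕ) : Prop :=
  IsSFoldDirectSum F d 2

/-- `F` is a limit (as `t → 0`) of `s`-fold direct sums of degree `d`. -/
def IsLimitOfSFoldDirectSums (F : MvPolynomial (Fin n) ℂ) (d s : ℕ) : Prop :=
  ∃ G : ℂ → MvPolynomial (Fin n) ℂ,
    (∀ t : ℂ, t ≠ 0 → IsSFoldDirectSum (G t) d s) ∧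
    ∀ m : Fin n →₀ ℕ,
      Filter.Tendsto (fun t => MvPolynomial.coeff m (G t))
        (nhdsWithin (0 : ℂ) {(0 : ℂ)}ᶜ) (nhds (MvPolynomial.coeff m F))

/-- `F` is a limit of direct sums. -/
def IsLimitOfDirectSums (F : MvPolynomial (Fin n) ℂ) (d : ℕ) : Prop :=
  IsLimitOfSFoldDirectSums F d 2

/-- `F` is concise: `(F^⊥)_1 = 0`, i.e. `F` cannot be written using fewer variables. -/
def Concise (F : MvPolynomial (Fin n) ℂ) : Prop :=
  ∀ Θ : MvPolynomial (Fin n) ℂ, Θ.IsHomogeneous 1 → contract Θ F = 0 → Θ = 0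

end Apolarity
noncomputable section Aux

open MvPolynomial Finsupp

variable {n : ℕ}

lemma contract_mul (a b F : MvPolynomial (Fin n) ℂ) :
    contract (a * b) F = contract a (contract b F) := by
  rw [contract, map_mul]; rfl

lemma contract_one (F : MvPolynomial (Fin n) ℂ) : contract 1 F = F := by
  rw [contract, map_one]; rfl

lemma contract_C (a : ℂ) (F : MvPolynomial (Fin n) ℂ) : contract (C a) F = a • F := by
  rw [contract, ← MvPolynomial.algebraMap_eq, AlgHom.commutes]
  exact rfl

lemma contract_add_right (Θ F G : MvPolynomial (Fin n) ℂ) :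
    contract Θ (F + G) = contract Θ F + contract Θ G :=
  map_add (apolarAlgHom n Θ) F G

lemma contract_add_left (Θ Ψ F : MvPolynomial (Fin n) ℂ) :
    contract (Θ + Ψ) F = contract Θ F + contract Ψ F := by
  rw [contract, map_add]; rfl

lemma contract_smul_left (c : ℂ) (Θ F : MvPolynomial (Fin n) ℂ) :
    contract (c • Θ) F = c • contract Θ F := by
  rw [contract, map_smul]; rfl

lemma contract_zero_right (Θ : MvPolynomial (Fin n) ℂ) : contract Θ 0 = 0 :=
  map_zero (apolarAlgHom n Θ)

/-- the scaled factorial ∏ (m j)! as a complex number -/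
def mfac (m : Fin n →₀ ℕ) : ℂ := ∏ j : Fin n, ((m j).factorial : ℂ)

lemma mfac_ne_zero (m : Fin n →₀ ℕ) : mfac m ≠ 0 :=
  Finset.prod_ne_zero_iff.2 fun j _ => Nat.cast_ne_zero.2 (Nat.factorial_pos _).ne'

lemma degree_add' (a b : Fin n →₀ ℕ) :
    Finsupp.degree (a + b) = Finsupp.degree a + Finsupp.degree b := by
  simp [degree_eq_weight_one, map_add]

lemma degree_single' (i : Fin n) : Finsupp.degree (Finsupp.single i 1) = 1 := by
  exact Finsupp.degree_single i 1

lemma contract_monomial_monomial (d : ℕ) :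
    ∀ (m m' : Fin n →₀ ℕ) (c : ℂ), m.degree = d → m'.degree = d →
      contract (monomial m 1) (monomial m' c) =
        if m = m' then C (mfac m * c) else 0 := by
  induction d with
  | zero =>
    intro m m' c hm hm'
    rw [Finsupp.degree_eq_zero_iff] at hm hm'
    subst hm; subst hm'
    simp only [if_pos rfl]
    rw [show (monomial (0 : Fin n →₀ ℕ) (1:ℂ)) = 1 from rfl, contract_one]
    rw [show mfac (0 : Fin n →₀ ℕ) = 1 from by simp [mfac], one_mul, C_apply]
    simp
  | succ e ih =>
    intro m m' c hm hm'
    have hm0 : m ≠ 0 := by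
      intro h; rw [h, map_zero] at hm; omega
    obtain ⟨i, hi⟩ : ∃ i, m i ≠ 0 := by
      by_contra h; push_neg at h; exact hm0 (Finsupp.ext fun i => h i)
    set m'' := m - Finsupp.single i 1 with hm''def
    have hmm : m'' + Finsupp.single i 1 = m := by
      ext j
      rcases eq_or_ne j i with rfl | hj
      · simp [hm''def, Finsupp.single_eq_same]
        omega
      · simp [hm''def, Finsupp.single_eq_of_ne hj]
    have hdm'' : m''.degree = e := by
      have := degree_add' m'' (Finsupp.single i 1)
      rw [hmm, hm, degree_single'] at this; omega
    have hsplit : (monomial m (1:ℂ)) = monomial m'' 1 * X i := by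
      rw [X, monomial_mul, mul_one, hmm]
    rw [hsplit, contract_mul, contract_X, pderiv_monomial]
    rcases eq_or_ne (m' i) 0 with h0 | h0
    · rw [h0]
      simp only [Nat.cast_zero, mul_zero, map_zero, contract_zero_right]
      have : m ≠ m' := fun h => hi (by rw [h]; exact h0)
      rw [if_neg this]
    · set m''' := m' - Finsupp.single i 1 with hm'''def
      have hmm' : m''' + Finsupp.single i 1 = m' := by
        ext j
        rcases eq_or_ne j i with rfl | hj
        · simp [hm'''def, Finsupp.single_eq_same]
          omega
        · simp [hm'''def, Finsupp.single_eq_of_ne hj]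
      have hdm''' : m'''.degree = e := by
        have := degree_add' m''' (Finsupp.single i 1)
        rw [hmm', hm', degree_single'] at this; omega
      rw [ih m'' m''' (c * m' i) hdm'' hdm''']
      rcases eq_or_ne m m' with rfl | hne
      · have h23 : m'' = m''' := rfl
        rw [if_pos h23, if_pos rfl]
        congr 1
        have hfac : mfac m = (m'' i + 1) * mfac m'' := by
          rw [mfac, mfac, ← Finset.mul_prod_erase Finset.univ _ (Finset.mem_univ i),
            ← Finset.mul_prod_erase Finset.univ (fun j => ((m'' j).factorial : ℂ))
              (Finset.mem_univ i), ← mul_assoc]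
          congr 1
          · rw [← hmm]
            simp only [Finsupp.add_apply, Finsupp.single_eq_same, Nat.factorial_succ]
            push_cast; ring
          · apply Finset.prod_congr rfl
            intro j hj
            have hj' : j ≠ i := (Finset.mem_erase.1 hj).1
            rw [← hmm, Finsupp.add_apply, Finsupp.single_eq_of_ne hj', add_zero]
        have hmi : (m i : ℂ) = (m'' i : ℂ) + 1 := by
          rw [← hmm]; push_cast [Finsupp.add_apply, Finsupp.single_eq_same]; ring
        rw [hfac, hmi]; ring
      · have h23 : m'' ≠ m''' := by
          intro h
          apply hne
          rw [← hmm, ← hmm', h]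
        rw [if_neg h23, if_neg hne]

lemma contract_monomial_homogeneous {d : ℕ} {m : Fin n →₀ ℕ} {P : MvPolynomial (Fin n) ℂ}
    (hP : P.IsHomogeneous d) (hm : m.degree = d) :
    contract (monomial m 1) P = C (mfac m * coeff m P) := by
  conv_lhs => rw [P.as_sum]
  rw [show contract (monomial m 1) (∑ v ∈ P.support, monomial v (coeff v P))
      = ∑ v ∈ P.support, contract (monomial m 1) (monomial v (coeff v P)) from
    map_sum (apolarAlgHom n (monomial m 1)) _ _]
  rw [Finset.sum_congr rfl (fun v hv => contract_monomial_monomial d m v (coeff v P) hm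
    (by have := hP (MvPolynomial.mem_support_iff.1 hv)
        rw [degree_eq_weight_one]; exact this))]
  rw [Finset.sum_ite_eq (P.support) m (fun v => C (mfac m * coeff v P))]
  by_cases h : m ∈ P.support
  · simp [h]
  · rw [if_neg h]
    rw [MvPolynomial.notMem_support_iff.1 h]
    simp

end Aux
noncomputable section Aux2

open MvPolynomial Finsupp

variable {n : ℕ}

lemma homog_one_mem_span {p : MvPolynomial (Fin n) ℂ} (hp : p.IsHomogeneous 1) :
    p ∈ Submodule.span ℂ (Set.range (X : Fin n → MvPolynomial (Fin n) ℂ)) := by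
  have hps : p = ∑ m ∈ p.support, monomial m (coeff m p) := p.as_sum
  rw [hps]
  apply Submodule.sum_mem
  intro m hm
  have hdeg : m.degree = 1 := by
    have := hp (MvPolynomial.mem_support_iff.1 hm)
    rw [degree_eq_weight_one]; exact this
  have hm0 : m ≠ 0 := by
    intro h; rw [h, map_zero] at hdeg; omega
  obtain ⟨i, hi⟩ : ∃ i, m i ≠ 0 := by
    by_contra h; push_neg at h; exact hm0 (Finsupp.ext fun i => h i)
  have hiS : i ∈ m.support := Finsupp.mem_support_iff.2 hi
  have hsum : m i + ∑ j ∈ m.support.erase i, m j = 1 := by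
    rw [Finset.add_sum_erase _ _ hiS]; exact hdeg
  have hmi : m i = 1 := by omega
  have hrest : ∑ j ∈ m.support.erase i, m j = 0 := by omega
  have hsupp : m.support = {i} := by
    apply Finset.Subset.antisymm
    · intro j hj
      rcases eq_or_ne j i with rfl | hji
      · exact Finset.mem_singleton_self j
      · exfalso
        have hj' : j ∈ m.support.erase i := Finset.mem_erase.2 ⟨hji, hj⟩
        have := (Finset.sum_eq_zero_iff.1 hrest) j hj'
        exact Finsupp.mem_support_iff.1 hj this
    · intro j hj
      rw [Finset.mem_singleton] at hj; subst hj; exact hiS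
  have hms : m = Finsupp.single i 1 := by
    have := (Finsupp.support_eq_singleton.1 hsupp).2
    rwa [hmi] at this
  rw [hms]
  have hmono : (monomial (Finsupp.single i 1)) (coeff (Finsupp.single i 1) p)
      = (coeff (Finsupp.single i 1) p) • X i := by
    rw [MvPolynomial.smul_eq_C_mul, X, C_mul_monomial, mul_one]
  rw [hmono]
  exact Submodule.smul_mem _ _ (Submodule.subset_span ⟨i, rfl⟩)

lemma exists_proj (V₁ V₂ : Submodule ℂ (MvPolynomial (Fin n) ℂ)) (hdis : Disjoint V₁ V₂) :
    ∃ π : MvPolynomial (Fin n) ℂ →ₗ[ℂ] MvPolynomial (Fin n) ℂ,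
      (∀ v ∈ V₁, π v = v) ∧ (∀ v ∈ V₂, π v = 0) := by
  set e := V₂.mkQ.comp V₁.subtype with he
  have hker : LinearMap.ker e = ⊥ := by
    rw [LinearMap.ker_eq_bot']
    intro v hv
    have : (v : MvPolynomial (Fin n) ℂ) ∈ V₂ := by
      have : V₂.mkQ (v : MvPolynomial (Fin n) ℂ) = 0 := hv
      rwa [Submodule.mkQ_apply, Submodule.Quotient.mk_eq_zero] at this
    have : (v : MvPolynomial (Fin n) ℂ) ∈ (⊥ : Submodule ℂ _) :=
      hdis.le_bot ⟨v.2, this⟩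
    exact Subtype.ext (by simpa using this)
  obtain ⟨g, hg⟩ := e.exists_leftInverse_of_injective hker
  refine ⟨V₁.subtype ∘ₗ g ∘ₗ V₂.mkQ, fun v hv => ?_, fun v hv => ?_⟩
  · have hgv : g (V₂.mkQ v) = ⟨v, hv⟩ := by
      have := congrArg (fun f => f ⟨v, hv⟩) hg
      simpa [he] using this
    show (g (V₂.mkQ v) : MvPolynomial (Fin n) ℂ) = v
    rw [hgv]
  · have : V₂.mkQ v = 0 := by rwa [Submodule.mkQ_apply, Submodule.Quotient.mk_eq_zero]
    simp [this]

lemma adjoin_inter_eq_C {V₁ V₂ : Submodule ℂ (MvPolynomial (Fin n) ℂ)}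
    (h₁ : V₁ ≤ homogeneousSubmodule (Fin n) ℂ 1) (h₂ : V₂ ≤ homogeneousSubmodule (Fin n) ℂ 1)
    (hdis : Disjoint V₁ V₂) {p : MvPolynomial (Fin n) ℂ}
    (hp₁ : p ∈ Algebra.adjoin ℂ (V₁ : Set (MvPolynomial (Fin n) ℂ)))
    (hp₂ : p ∈ Algebra.adjoin ℂ (V₂ : Set (MvPolynomial (Fin n) ℂ))) :
    ∃ c : ℂ, p = C c := by
  obtain ⟨π, hπ₁, hπ₂⟩ := exists_proj V₁ V₂ hdis
  set φ : MvPolynomial (Fin n) ℂ →ₐ[ℂ] MvPolynomial (Fin n) ℂ :=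
    aeval (fun i => π (X i)) with hφ
  have hφlin : ∀ q : MvPolynomial (Fin n) ℂ, q.IsHomogeneous 1 → φ q = π q := by
    intro q hq
    have hsub : Set.range (X : Fin n → MvPolynomial (Fin n) ℂ)
        ⊆ (LinearMap.eqLocus φ.toLinearMap π : Set (MvPolynomial (Fin n) ℂ)) := by
      rintro _ ⟨i, rfl⟩
      show φ (X i) = π (X i)
      simp [hφ]
    have := Submodule.span_le.2 hsub (homog_one_mem_span hq)
    exact this
  have hfix : ∀ q, q ∈ Algebra.adjoin ℂ (V₁ : Set (MvPolynomial (Fin n) ℂ)) → φ q = q := by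
    intro q hq
    induction hq using Algebra.adjoin_induction with
    | mem v hv => rw [hφlin v (h₁ hv), hπ₁ v hv]
    | algebraMap r => exact φ.commutes r
    | add x y hx hy ihx ihy => rw [map_add, ihx, ihy]
    | mul x y hx hy ihx ihy => rw [map_mul, ihx, ihy]
  have hbot : ∀ q, q ∈ Algebra.adjoin ℂ (V₂ : Set (MvPolynomial (Fin n) ℂ)) →
      φ q ∈ (⊥ : Subalgebra ℂ (MvPolynomial (Fin n) ℂ)) := by
    intro q hq
    induction hq using Algebra.adjoin_induction with
    | mem v hv =>
      rw [hφlin v (h₂ hv), hπ₂ v hv]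
      exact Subalgebra.zero_mem _
    | algebraMap r => rw [φ.commutes r]; exact Subalgebra.algebraMap_mem _ r
    | add x y hx hy ihx ihy => rw [map_add]; exact Subalgebra.add_mem _ ihx ihy
    | mul x y hx hy ihx ihy => rw [map_mul]; exact Subalgebra.mul_mem _ ihx ihy
  have := hbot p hp₂
  rw [hfix p hp₁] at this
  obtain ⟨c, hc⟩ := Algebra.mem_bot.1 this
  exact ⟨c, hc.symm⟩

lemma pderiv_span_X {j : Fin n} {v : MvPolynomial (Fin n) ℂ}
    (hs : v ∈ Submodule.span ℂ (Set.range (X : Fin n → MvPolynomial (Fin n) ℂ))) :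
    ∃ c : ℂ, pderiv j v = C c := by
  induction hs using Submodule.span_induction with
  | mem x hx =>
    obtain ⟨i, rfl⟩ := hx
    rcases eq_or_ne j i with rfl | hji
    · exact ⟨1, by simp⟩
    · exact ⟨0, by simp [pderiv_X_of_ne (Ne.symm hji)]⟩
  | zero => exact ⟨0, by simp⟩
  | add x y hx hy ihx ihy =>
    obtain ⟨c, hc⟩ := ihx; obtain ⟨c', hc'⟩ := ihy
    exact ⟨c + c', by rw [map_add, hc, hc', map_add]⟩
  | smul a x hx ihx =>
    obtain ⟨c, hc⟩ := ihx
    exact ⟨a * c, by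
      rw [MvPolynomial.smul_eq_C_mul, pderiv_mul, pderiv_C, hc, zero_mul, zero_add, ← C_mul]⟩

lemma pderiv_homog_one {j : Fin n} {v : MvPolynomial (Fin n) ℂ} (hv : v.IsHomogeneous 1) :
    ∃ c : ℂ, pderiv j v = C c :=
  pderiv_span_X (homog_one_mem_span hv)

lemma pderiv_adjoin {V₁ : Submodule ℂ (MvPolynomial (Fin n) ℂ)}
    (h₁ : V₁ ≤ homogeneousSubmodule (Fin n) ℂ 1) (j : Fin n)
    {p : MvPolynomial (Fin n) ℂ}
    (hp : p ∈ Algebra.adjoin ℂ (V₁ : Set (MvPolynomial (Fin n) ℂ))) :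
    pderiv j p ∈ Algebra.adjoin ℂ (V₁ : Set (MvPolynomial (Fin n) ℂ)) := by
  induction hp using Algebra.adjoin_induction with
  | mem v hv =>
    obtain ⟨c, hc⟩ := pderiv_homog_one (j := j) (h₁ hv)
    rw [hc]
    exact Subalgebra.algebraMap_mem _ c
  | algebraMap r =>
    rw [show (algebraMap ℂ (MvPolynomial (Fin n) ℂ)) r = C r from rfl, pderiv_C]
    exact Subalgebra.zero_mem _
  | add x y hx hy ihx ihy => rw [map_add]; exact Subalgebra.add_mem _ ihx ihy
  | mul x y hx hy ihx ihy =>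
    rw [pderiv_mul]
    exact Subalgebra.add_mem _ (Subalgebra.mul_mem _ ihx hy) (Subalgebra.mul_mem _ hx ihy)

lemma contract_adjoin {V₁ : Submodule ℂ (MvPolynomial (Fin n) ℂ)}
    (h₁ : V₁ ≤ homogeneousSubmodule (Fin n) ℂ 1) (Ψ : MvPolynomial (Fin n) ℂ) :
    ∀ P ∈ Algebra.adjoin ℂ (V₁ : Set (MvPolynomial (Fin n) ℂ)),
      contract Ψ P ∈ Algebra.adjoin ℂ (V₁ : Set (MvPolynomial (Fin n) ℂ)) := by
  induction Ψ using MvPolynomial.induction_on with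
  | C a =>
    intro P hP
    rw [contract_C]
    exact Subalgebra.smul_mem _ hP a
  | add p q ihp ihq =>
    intro P hP
    rw [contract_add_left]
    exact Subalgebra.add_mem _ (ihp P hP) (ihq P hP)
  | mul_X p i ihp =>
    intro P hP
    rw [contract_mul, contract_X]
    exact ihp _ (pderiv_adjoin h₁ i hP)

end Aux2
noncomputable section Aux3

open MvPolynomial Finsupp

variable {n : ℕ}

lemma contract_zero_left (F : MvPolynomial (Fin n) ℂ) : contract 0 F = 0 := by
  rw [contract, map_zero]; rfl

lemma contract_sum_left {α : Type*} (t : Finset α) (Ψ : α → MvPolynomial (Fin n) ℂ)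
    (F : MvPolynomial (Fin n) ℂ) :
    contract (∑ i ∈ t, Ψ i) F = ∑ i ∈ t, contract (Ψ i) F := by
  classical
  induction t using Finset.induction_on with
  | empty => simp [contract_zero_left]
  | insert a s h ih =>
    rw [Finset.sum_insert h, Finset.sum_insert h, contract_add_left, ih]

set_option synthInstance.maxHeartbeats 1000000 in
lemma exists_separating_dual (M : Submodule ℂ (MvPolynomial (Fin n) ℂ))
    (p : MvPolynomial (Fin n) ℂ) (hp : p ∉ M) :
    ∃ f : MvPolynomial (Fin n) ℂ →ₗ[ℂ] ℂ, (∀ q ∈ M, f q = 0) ∧ f p ≠ 0 := by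
  have hmkQ : M.mkQ p ≠ 0 := by
    rw [Submodule.mkQ_apply, ne_eq, Submodule.Quotient.mk_eq_zero]
    exact hp
  obtain ⟨g, hg⟩ : ∃ g : Module.Dual ℂ (MvPolynomial (Fin n) ℂ ⧸ M), g (M.mkQ p) ≠ 0 := by
    by_contra h
    push_neg at h
    exact hmkQ ((Module.forall_dual_apply_eq_zero_iff ℂ _).1 h)
  refine ⟨g ∘ₗ M.mkQ, fun q hq => ?_, hg⟩
  have hq0 : M.mkQ q = 0 := by
    rw [Submodule.mkQ_apply, Submodule.Quotient.mk_eq_zero]; exact hq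
  rw [LinearMap.comp_apply, hq0, map_zero]

end Aux3

/-- If a homogeneous form `F` of degree `d` in `n` variables over `ℂ`
is a direct sum, then its apolar ideal `F^⊥` has a minimal generator of degree `d`. -/
theorem direct_sum_has_equipotent_apolar_generator
    (n d : ℕ) (hd : 1 ≤ d) (F : MvPolynomial (Fin n) ℂ)
    (hF : F.IsHomogeneous d) (hDS : IsDirectSum F d) :
    HasMinGenOfDegree (apolarIdeal F) d := by
  classical
  open MvPolynomial Finsupp in
  obtain ⟨V, G, hV1, hindep, hVsup, hG, hFsum⟩ := hDS
  have hFsum' : F = G 0 + G 1 := by rw [hFsum, Fin.sum_univ_two]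
  have hdis : Disjoint (V 0) (V 1) :=
    hindep.pairwiseDisjoint (by decide : (0 : Fin 2) ≠ 1)
  -- Step A : G 0 ∉ span {F}
  have hG1span : G 0 ∉ Submodule.span ℂ {F} := by
    intro hmem
    obtain ⟨a, ha⟩ := Submodule.mem_span_singleton.1 hmem
    have ha0 : a ≠ 0 := by
      rintro rfl
      exact (hG 0).1 (by rw [← ha, zero_smul])
    have hFadj : F = a⁻¹ • G 0 := by
      rw [← ha, smul_smul, inv_mul_cancel₀ ha0, one_smul]
    have hG2 : G 1 = F - G 0 := by rw [hFsum']; ring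
    have hG2adj1 : G 1 ∈ Algebra.adjoin ℂ ((V 0 : Set (MvPolynomial (Fin n) ℂ))) := by
      rw [hG2, hFadj]
      exact Subalgebra.sub_mem _ (Subalgebra.smul_mem _ (hG 0).2.2 _) (hG 0).2.2
    obtain ⟨c, hc⟩ := adjoin_inter_eq_C (hV1 0) (hV1 1) hdis hG2adj1 (hG 1).2.2
    have hcne : c ≠ 0 := by
      rintro rfl
      exact (hG 1).1 (by rw [hc, map_zero])
    have h0 : coeff (0 : Fin n →₀ ℕ) (G 1) ≠ 0 := by
      rw [hc, coeff_C]; simpa using hcne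
    have := (hG 1).2.1 h0
    rw [map_zero] at this
    omega
  -- Step B : dual functional
  obtain ⟨f, hfM, hfG1⟩ :=
    exists_separating_dual (Submodule.span ℂ ({F} : Set (MvPolynomial (Fin n) ℂ))) (G 0) hG1span
  have hfF : f F = 0 := hfM F (Submodule.mem_span_singleton_self F)
  -- Step C : the polynomial Θ
  set s : Finset (Fin n →₀ ℕ) := F.support ∪ (G 0).support with hs
  set Θ : MvPolynomial (Fin n) ℂ :=
    ∑ m ∈ s, ((mfac m)⁻¹ * f ((monomial m) 1)) • (monomial m (1 : ℂ)) with hΘ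
  have hdegs : ∀ m ∈ s, Finsupp.degree m = d := by
    intro m hm
    rcases Finset.mem_union.1 hm with h | h
    · have := hF (MvPolynomial.mem_support_iff.1 h)
      rw [degree_eq_weight_one]; exact this
    · have := (hG 0).2.1 (MvPolynomial.mem_support_iff.1 h)
      rw [degree_eq_weight_one]; exact this
  have hpair : ∀ P : MvPolynomial (Fin n) ℂ, P.IsHomogeneous d → P.support ⊆ s →
      contract Θ P = C (f P) := by
    intro P hP hsupp
    have hPs : P = ∑ m ∈ s, (monomial m) (coeff m P) := by
      conv_lhs => rw [P.as_sum]
      exact Finset.sum_subset hsupp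
        (fun m _ hm => by rw [MvPolynomial.notMem_support_iff.1 hm, map_zero])
    calc contract Θ P
        = ∑ m ∈ s, ((mfac m)⁻¹ * f ((monomial m) 1)) • contract ((monomial m) 1) P := by
          rw [hΘ, contract_sum_left]
          exact Finset.sum_congr rfl fun m _ => contract_smul_left _ _ _
      _ = ∑ m ∈ s, C (f ((monomial m) 1) * coeff m P) := by
          refine Finset.sum_congr rfl fun m hm => ?_
          rw [contract_monomial_homogeneous hP (hdegs m hm), MvPolynomial.smul_eq_C_mul, ← C_mul]
          congr 1
          field_simp
          rw [mul_assoc, mul_div_right_comm, div_self (mfac_ne_zero m), one_mul]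
      _ = C (∑ m ∈ s, f ((monomial m) 1) * coeff m P) := by rw [map_sum]
      _ = C (f (∑ m ∈ s, (monomial m) (coeff m P))) := by
          congr 1
          rw [map_sum]
          refine (Finset.sum_congr rfl fun m _ => ?_).symm
          rw [show (monomial m) (coeff m P) = (coeff m P) • (monomial m (1:ℂ)) from by
            rw [MvPolynomial.smul_eq_C_mul, C_mul_monomial, mul_one], map_smul]
          simp [mul_comm]
      _ = C (f P) := by rw [← hPs]
  have hΘhom : Θ.IsHomogeneous d := by
    rw [← mem_homogeneousSubmodule]
    rw [hΘ]
    refine Submodule.sum_mem _ fun m hm => Submodule.smul_mem _ _ ?_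
    rw [mem_homogeneousSubmodule]
    exact isHomogeneous_monomial 1 (hdegs m hm)
  -- Step D : vanishing on m * I
  have key : ∀ a ∈ irrIdeal n, ∀ b ∈ apolarIdeal F,
      coeff (0 : Fin n →₀ ℕ) (contract (a * b) (G 0)) = 0 := by
    intro a ha
    induction ha using Submodule.span_induction with
    | mem x hx =>
      obtain ⟨j, rfl⟩ := hx
      intro b hb
      have hb0 : contract b F = 0 := hb
      have hbG : contract b (G 0) + contract b (G 1) = 0 := by
        rw [← contract_add_right, ← hFsum', hb0]
      have h1 : contract b (G 0) ∈ Algebra.adjoin ℂ ((V 0 : Set (MvPolynomial (Fin n) ℂ))) :=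
        contract_adjoin (hV1 0) b _ (hG 0).2.2
      have h2 : contract b (G 0) ∈ Algebra.adjoin ℂ ((V 1 : Set (MvPolynomial (Fin n) ℂ))) := by
        have hneg : contract b (G 0) = - contract b (G 1) := by
          rw [eq_neg_iff_add_eq_zero]; exact hbG
        rw [hneg]
        exact Subalgebra.neg_mem _ (contract_adjoin (hV1 1) b _ (hG 1).2.2)
      obtain ⟨c, hc⟩ := adjoin_inter_eq_C (hV1 0) (hV1 1) hdis h1 h2
      rw [contract_mul, contract_X, hc, pderiv_C]
      exact coeff_zero _
    | zero =>
      intro b hb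
      rw [zero_mul, contract_zero_left, coeff_zero]
    | add x y hx hy ihx ihy =>
      intro b hb
      rw [add_mul, contract_add_left, coeff_add, ihx b hb, ihy b hb, add_zero]
    | smul r x hx ihx =>
      intro b hb
      rw [show r • x * b = x * (r * b) from by rw [smul_eq_mul]; ring]
      exact ihx (r * b) (Ideal.mul_mem_left _ r hb)
  have hvan : ∀ t ∈ (irrIdeal n) * (apolarIdeal F),
      coeff (0 : Fin n →₀ ℕ) (contract t (G 0)) = 0 := by
    intro t ht
    refine Submodule.mul_induction_on ht (fun a ha b hb => key a ha b hb) ?_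
    intro x y hx hy
    rw [contract_add_left, coeff_add, hx, hy, add_zero]
  -- conclusion
  refine ⟨Θ, ?_, hΘhom, ?_⟩
  · show contract Θ F = 0
    rw [hpair F hF Finset.subset_union_left, hfF, map_zero]
  · intro hmem
    have hv := hvan Θ hmem
    rw [hpair (G 0) (hG 0).2.1 Finset.subset_union_right, coeff_C] at hv
    simp only [if_pos rfl] at hv
    exact hfG1 (by simpa using hv)
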